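/- Under the same block construction as before: if A ⊆ [k]^n, Ă = ∪_{x∈A} R_x ⊆ [l]^n, and C ⊆ [k]^n with C̆ = ∪_{x∈C} R_x, and if (1 + k/(l-k))^n ≤ 2 and |Ă Δ C̆|/l^n ≤ ε/2, then |A Δ C|/k^n ≤ ε. -/

import Mathlib

/-- The vertex set of the `ℓ¹`-grid `G_{k,n}`, as points of `ℕ^n` with coordinates in
`{1,…,k}`. -/
def gridPts (k n : ℕ) : Set (Fin n → ℕ) := {y | ∀ i, y i ∈ Finset.Icc 1 k}

/-- The block `R_x ⊆ [l]^n` of the point `x ∈ [k]^n`: those `y ∈ [l]^n` with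
`⌈y_i k / l⌉ = x_i` for all `i` (`⌈a/l⌉ = (a + l - 1)/l` in ℕ). -/
def block (k l n : ℕ) (x : Fin n → ℕ) : Set (Fin n → ℕ) :=
  {y | y ∈ gridPts l n ∧ ∀ i, (y i * k + l - 1) / l = x i}

lemma ceil_div_eq_iff {l a j : ℕ} (hl : 0 < l) (ha : 0 < a) (hj : 0 < j) :
    (a + l - 1) / l = j ↔ ((j-1)*l < a ∧ a ≤ j*l) := by
  have h1 : a + l - 1 = (a - 1) + l := by omega
  rw [h1, Nat.add_div_right _ hl]
  have hle : j - 1 ≤ (a-1)/l ↔ (j-1) * l ≤ a - 1 := Nat.le_div_iff_mul_le hl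
  have hlt : (a-1)/l < j ↔ a - 1 < j * l := Nat.div_lt_iff_lt_mul hl
  have hmul : (j-1)*l + l = j*l := by
    cases j with
    | zero => omega
    | succ j => simp [Nat.succ_mul]
  set q := (a-1)/l with hq
  generalize hm : (j-1)*l = m at hle hmul
  generalize hM : j*l = M at hlt hmul ⊢
  omega

lemma mem_fibF {k l j y : ℕ} (hk : 0 < k) (hl : k ≤ l) (hj : 1 ≤ j) (hjk : j ≤ k) :
    y ∈ Finset.Ioc ((j-1)*l/k) (j*l/k) ↔ (y ∈ Finset.Icc 1 l ∧ (y*k + l - 1)/l = j) := by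
  have hl0 : 0 < l := lt_of_lt_of_le hk hl
  rw [Finset.mem_Ioc, Finset.mem_Icc, Nat.div_lt_iff_lt_mul hk, Nat.le_div_iff_mul_le hk]
  constructor
  · rintro ⟨h1, h2⟩
    have hy1 : 1 ≤ y := by
      rcases Nat.eq_zero_or_pos y with h | h
      · subst h; simp at h1
      · exact h
    have hy2 : y ≤ l := by nlinarith
    refine ⟨⟨hy1, hy2⟩, ?_⟩
    rw [ceil_div_eq_iff hl0 (Nat.mul_pos hy1 hk) hj]
    exact ⟨h1, h2⟩
  · rintro ⟨⟨hy1, hy2⟩, h⟩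
    rw [ceil_div_eq_iff hl0 (Nat.mul_pos hy1 hk) hj] at h
    exact h

lemma fibF_card {k l j : ℕ} (hk : 0 < k) (hj : 1 ≤ j) :
    l / k ≤ (Finset.Ioc ((j-1)*l/k) (j*l/k)).card := by
  rw [Nat.card_Ioc]
  have h := Nat.add_div_le_add_div ((j-1)*l) l k
  have hmul : (j-1)*l + l = j*l := by
    cases j with
    | zero => omega
    | succ j => simp [Nat.succ_mul]
  rw [hmul] at h
  set a := (j-1)*l/k
  set b := j*l/k
  set c := l/k
  omega

lemma block_eq {k l n : ℕ} (hk : 0 < k) (hl : k ≤ l) {x : Fin n → ℕ} (hx : x ∈ gridPts k n) :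
    block k l n x = ↑(Fintype.piFinset (fun i => Finset.Ioc ((x i - 1)*l/k) (x i * l/k))) := by
  ext y
  simp only [block, gridPts, Set.mem_setOf_eq, Finset.mem_coe, Fintype.mem_piFinset]
  have hxi : ∀ i, 1 ≤ x i ∧ x i ≤ k := fun i => Finset.mem_Icc.1 (hx i)
  constructor
  · rintro ⟨h1, h2⟩ i
    exact (mem_fibF hk hl (hxi i).1 (hxi i).2).2 ⟨h1 i, h2 i⟩
  · intro h
    exact ⟨fun i => ((mem_fibF hk hl (hxi i).1 (hxi i).2).1 (h i)).1,
           fun i => ((mem_fibF hk hl (hxi i).1 (hxi i).2).1 (h i)).2⟩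

lemma gridPts_finite (k n : ℕ) : (gridPts k n).Finite := by
  apply Set.Finite.subset
    (Set.Finite.pi (fun _ : Fin n => (Finset.Icc 1 k).finite_toSet))
  intro y hy
  rw [Set.mem_pi]
  intro i _
  exact hy i

lemma mem_biUnion_block {k l n : ℕ} (hl0 : 0 < l) {A : Set (Fin n → ℕ)} {y : Fin n → ℕ} :
    y ∈ ⋃ x ∈ A, block k l n x ↔ y ∈ gridPts l n ∧ (fun i => (y i * k + l - 1)/l) ∈ A := by
  simp only [Set.mem_iUnion, block, Set.mem_setOf_eq, exists_prop]
  constructor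
  · rintro ⟨x, hxA, hy, hx⟩
    refine ⟨hy, ?_⟩
    have : (fun i => (y i * k + l - 1)/l) = x := funext hx
    rwa [this]
  · rintro ⟨hy, hA⟩
    exact ⟨_, hA, hy, fun i => rfl⟩

/-- Under the block construction, if `(1 + k/(l-k))^n ≤ 2` and
`|Ă Δ C̆|/l^n ≤ ε/2`, then `|A Δ C|/k^n ≤ ε`. -/
theorem stmt19 (k l n : ℕ) (hn : 0 < n) (hk : 2 ≤ k) (hl : k < l)
    (hcond : (1 + (k : ℝ) / ((l : ℝ) - k)) ^ n ≤ 2)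
    (A C : Set (Fin n → ℕ)) (hA : A ⊆ gridPts k n) (hC : C ⊆ gridPts k n) (ε : ℝ)
    (hΔ : ((symmDiff (⋃ x ∈ A, block k l n x) (⋃ x ∈ C, block k l n x)).ncard : ℝ) /
        (l : ℝ) ^ n ≤ ε / 2) :
    ((symmDiff A C).ncard : ℝ) / (k : ℝ) ^ n ≤ ε := by
  classical
  have hk0 : 0 < k := by omega
  have hl0 : 0 < l := by omega
  have hkl : k ≤ l := le_of_lt hl
  -- T and its finiteness
  set T := symmDiff A C with hT
  have hTsub : T ⊆ gridPts k n := by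
    intro x hx
    rcases Set.mem_symmDiff.1 hx with ⟨h, _⟩ | ⟨h, _⟩
    · exact hA h
    · exact hC h
  have hTfin : T.Finite := (gridPts_finite k n).subset hTsub
  set t : Finset (Fin n → ℕ) := hTfin.toFinset with ht
  -- the big symmetric difference equals the union over T
  have hkey : symmDiff (⋃ x ∈ A, block k l n x) (⋃ x ∈ C, block k l n x)
      = ⋃ x ∈ T, block k l n x := by
    ext y
    rw [Set.mem_symmDiff, mem_biUnion_block hl0, mem_biUnion_block hl0,
      mem_biUnion_block hl0, hT, Set.mem_symmDiff]
    tauto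
  -- finset version of the union
  set piF : (Fin n → ℕ) → Finset (Fin n → ℕ) :=
    fun x => Fintype.piFinset (fun i => Finset.Ioc ((x i - 1)*l/k) (x i * l/k)) with hpiF
  have hunion : (⋃ x ∈ T, block k l n x) = ↑(t.biUnion piF) := by
    ext y
    simp only [Set.mem_iUnion, exists_prop, Finset.coe_biUnion, Set.mem_iUnion, Finset.mem_coe,
      Set.Finite.mem_toFinset, ht]
    constructor
    · rintro ⟨x, hx, hy⟩
      exact ⟨x, hx, by rwa [block_eq hk0 hkl (hTsub hx)] at hy⟩
    · rintro ⟨x, hx, hy⟩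
      exact ⟨x, hx, by rwa [block_eq hk0 hkl (hTsub hx)]⟩
  -- disjointness
  have hdisj : ∀ x ∈ t, ∀ x' ∈ t, x ≠ x' → Disjoint (piF x) (piF x') := by
    intro x hx x' hx' hne
    rw [Finset.disjoint_left]
    intro y hy hy'
    apply hne
    have h1 := (block_eq hk0 hkl (hTsub (hTfin.mem_toFinset.1 hx))).symm
    have h2 := (block_eq hk0 hkl (hTsub (hTfin.mem_toFinset.1 hx'))).symm
    have hy1 : y ∈ block k l n x := by rw [block_eq hk0 hkl (hTsub (hTfin.mem_toFinset.1 hx))]; exact hy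
    have hy2 : y ∈ block k l n x' := by rw [block_eq hk0 hkl (hTsub (hTfin.mem_toFinset.1 hx'))]; exact hy'
    funext i
    rw [← hy1.2 i, ← hy2.2 i]
  -- cardinality bound
  set m := l / k with hm
  have hcard : t.card * m ^ n ≤ (t.biUnion piF).card := by
    rw [Finset.card_biUnion hdisj]
    calc t.card * m ^ n = ∑ _x ∈ t, m ^ n := by rw [Finset.sum_const, smul_eq_mul]
    _ ≤ ∑ x ∈ t, (piF x).card := by
        apply Finset.sum_le_sum
        intro x hx
        have hxg := hTsub (hTfin.mem_toFinset.1 hx)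
        rw [hpiF, Fintype.card_piFinset]
        calc m ^ n = ∏ _i : Fin n, m := by simp
        _ ≤ ∏ i : Fin n, (Finset.Ioc ((x i - 1)*l/k) (x i * l/k)).card := by
            apply Finset.prod_le_prod (fun _ _ => Nat.zero_le _)
            intro i _
            exact fibF_card hk0 (Finset.mem_Icc.1 (hxg i)).1
  -- translate to ncards
  have hSval : (symmDiff (⋃ x ∈ A, block k l n x) (⋃ x ∈ C, block k l n x)).ncard
      = (t.biUnion piF).card := by
    rw [hkey, hunion, Set.ncard_coe_finset]
  have hsval : T.ncard = t.card := Set.ncard_eq_toFinset_card T hTfin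
  have hnat : T.ncard * m ^ n ≤
      (symmDiff (⋃ x ∈ A, block k l n x) (⋃ x ∈ C, block k l n x)).ncard := by
    rw [hSval, hsval]; exact hcard
  set S := (symmDiff (⋃ x ∈ A, block k l n x) (⋃ x ∈ C, block k l n x)).ncard with hS
  set s := T.ncard with hs
  have hK : (2:ℝ) ≤ (k:ℝ) := by exact_mod_cast hk
  have hLK : (0:ℝ) < (l:ℝ) - k := by
    have : (k:ℝ) < l := by exact_mod_cast hl
    linarith
  have hKpos : (0:ℝ) < (k:ℝ) := by linarith
  have hLpos : (0:ℝ) < (l:ℝ) := by linarith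
  have hmK : (l:ℝ) - k ≤ (m:ℝ) * k := by
    have h1 : l < k * (l / k) + k := by
      have h2 := Nat.div_add_mod l k
      have h3 := Nat.mod_lt l hk0
      omega
    have : (l:ℝ) < k * m + k := by exact_mod_cast h1
    nlinarith
  have hP : (0:ℝ) < ((l:ℝ) - k) ^ n := pow_pos hLK n
  have hQ : (0:ℝ) < (k:ℝ) ^ n := pow_pos hKpos n
  have hLn : (l:ℝ) ^ n ≤ 2 * ((l:ℝ) - k) ^ n := by
    have he : 1 + (k:ℝ) / ((l:ℝ) - k) = l / ((l:ℝ) - k) := by field_simp; ring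
    rw [he, div_pow, div_le_iff₀ hP] at hcond
    linarith
  have h1 : (s:ℝ) * ((l:ℝ)-k)^n ≤ (S:ℝ) * (k:ℝ)^n := by
    have h2 : ((l:ℝ)-k)^n ≤ ((m:ℝ)*k)^n := pow_le_pow_left₀ (le_of_lt hLK) hmK n
    have h3 : (s:ℝ) * ((m:ℝ)*k)^n ≤ (S:ℝ) * (k:ℝ)^n := by
      rw [mul_pow]
      have h4 : (s:ℝ) * ((m:ℝ)^n) ≤ S := by exact_mod_cast hnat
      nlinarith [pow_nonneg (le_of_lt hKpos) n]
    calc (s:ℝ) * ((l:ℝ)-k)^n ≤ (s:ℝ) * ((m:ℝ)*k)^n :=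
          mul_le_mul_of_nonneg_left h2 (Nat.cast_nonneg s)
      _ ≤ _ := h3
  have hSle : (S:ℝ) ≤ ε/2 * (l:ℝ)^n := by
    rw [div_le_iff₀ (pow_pos hLpos n)] at hΔ
    exact hΔ
  have hε : 0 ≤ ε := by
    by_contra h
    push_neg at h
    have h5 : (0:ℝ) ≤ (S:ℝ) := Nat.cast_nonneg S
    have h6 : ε/2 * (l:ℝ)^n < 0 :=
      mul_neg_of_neg_of_pos (by linarith) (pow_pos hLpos n)
    linarith
  rw [div_le_iff₀ hQ]
  have hfin : (s:ℝ) * ((l:ℝ)-k)^n ≤ ε * (k:ℝ)^n * ((l:ℝ)-k)^n := by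
    calc (s:ℝ)*((l:ℝ)-k)^n ≤ (S:ℝ)*(k:ℝ)^n := h1
      _ ≤ (ε/2 * (l:ℝ)^n) * (k:ℝ)^n := mul_le_mul_of_nonneg_right hSle (le_of_lt hQ)
      _ ≤ (ε/2 * (2*((l:ℝ)-k)^n)) * (k:ℝ)^n := by
          apply mul_le_mul_of_nonneg_right _ (le_of_lt hQ)
          exact mul_le_mul_of_nonneg_left hLn (by linarith)
      _ = ε * (k:ℝ)^n * ((l:ℝ)-k)^n := by ring
  exact le_of_mul_le_mul_right hfin hP
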